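/- For all x in (0, π/2), (1 - cos(x)/cos(x/2))/x² < 4/π². -/

import Mathlib

open Real

set_option maxHeartbeats 1000000 in
lemma key (t : ℝ) (ht0 : 0 < t) (ht1 : t < π/4) :
    π^2 * (cos t - cos (2*t)) < 16 * t^2 * cos t := by
  have hπl : π > 3.141592 := pi_gt_d6
  have hπu : π < 3.141593 := pi_lt_d6
  have hπ2u : π^2 < 9.8697 := by nlinarith
  have hπ2l : π^2 > 9.8696 := by nlinarith
  have hid : cos t = 1 - 2 * sin (t/2)^2 := by
    have h1 : cos (2*(t/2)) = 2 * cos (t/2)^2 - 1 := Real.cos_two_mul _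
    have h2 := Real.sin_sq_add_cos_sq (t/2)
    rw [show 2*(t/2) = t by ring] at h1
    nlinarith
  have hsle : sin (t/2) ≤ t/2 := Real.sin_le (by positivity)
  have hs0 : 0 ≤ sin (t/2) := Real.sin_nonneg_of_nonneg_of_le_pi (by positivity) (by nlinarith)
  have hcl : 1 - t^2/2 ≤ cos t := by nlinarith
  have hcu : cos t ≤ 1 := Real.cos_le_one t
  rcases le_or_gt t (31/50) with h | h
  · -- easy region
    have hcos2 : cos (2*t) = 2 * cos t ^ 2 - 1 := Real.cos_two_mul t
    have hclow : (0.8078:ℝ) ≤ cos t := by nlinarith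
    have hkey : π^2 * (1 + 2*cos t) < 32 * cos t := by
      nlinarith [mul_lt_mul_of_pos_right hπ2u (show (0:ℝ) < 1 + 2*cos t by linarith)]
    have h1mc : 1 - cos t ≤ t^2/2 := by nlinarith
    have e1 : π^2 * (cos t - cos (2*t)) = (1 - cos t) * (π^2 * (1 + 2*cos t)) := by
      rw [hcos2]; ring
    have e2 : (1 - cos t) * (π^2 * (1 + 2*cos t)) ≤ (t^2/2) * (π^2 * (1 + 2*cos t)) :=
      mul_le_mul_of_nonneg_right h1mc (by positivity)
    have e3 : (t^2/2) * (π^2 * (1 + 2*cos t)) < (t^2/2) * (32 * cos t) :=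
      mul_lt_mul_of_pos_left hkey (by positivity)
    have e4 : (t^2/2) * (32 * cos t) = 16 * t^2 * cos t := by ring
    linarith
  · -- near π/4 region
    obtain ⟨s, hs⟩ : ∃ s : ℝ, s = π/4 - t := ⟨_, rfl⟩
    have hs0' : 0 < s := by rw [hs]; linarith
    have hs1 : s ≤ 0.1653983 := by rw [hs]; nlinarith
    have ht : t = π/4 - s := by rw [hs]; ring
    have hc2t : cos (2*t) = sin (2*s) := by
      rw [ht, show 2*(π/4 - s) = π/2 - 2*s by ring, Real.cos_pi_div_two_sub]
    have hct : cos t = Real.sqrt 2/2 * (cos s + sin s) := by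
      rw [ht, Real.cos_sub, Real.cos_pi_div_four, Real.sin_pi_div_four]; ring
    have hsq2 : Real.sqrt 2 ^ 2 = 2 := Real.sq_sqrt (by norm_num)
    have hsq2p : (0:ℝ) < Real.sqrt 2 := Real.sqrt_pos.2 (by norm_num)
    have hsq2u : Real.sqrt 2 < 1.41422 := by nlinarith
    have hsinlt : sin s < s := Real.sin_lt hs0'
    have hcoss : cos s ≤ 1 := Real.cos_le_one s
    have hsinub : sin (2*s) ≥ 2*s - (4/3)*s^3 - (5/6)*s^4 := by
      have habs : |2*s| = 2*s := abs_of_nonneg (by linarith)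
      have hle1 : |(2*s : ℝ)| ≤ 1 := by rw [habs]; linarith
      have hb := Real.sin_bound hle1
      rw [habs] at hb
      have h2 := (abs_sub_le_iff.1 hb).2
      nlinarith [h2, mul_nonneg (pow_nonneg (le_of_lt hs0') 4) (sub_nonneg.2 hs1)]
    have hCS : cos s + sin s < 1 + s := by linarith
    have hCSpos : 0 < cos s + sin s := by
      have h1 : 0 < cos s := Real.cos_pos_of_mem_Ioo (Set.mem_Ioo.mpr ⟨by linarith, by linarith⟩)
      have h2 : 0 ≤ sin s := Real.sin_nonneg_of_nonneg_of_le_pi (le_of_lt hs0') (by linarith)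
      linarith
    have hBpos : 0 < 8*π*s - 16*s^2 := by
      have h1 : 0 < 8*π - 16*s := by linarith
      nlinarith [mul_pos hs0' h1]
    have step1 : (8*π*s - 16*s^2) * (Real.sqrt 2/2 * (cos s + sin s))
        < (8*π*s - 16*s^2) * (Real.sqrt 2/2 * (1 + s)) := by
      have hAA : Real.sqrt 2/2 * (cos s + sin s) < Real.sqrt 2/2 * (1 + s) :=
        mul_lt_mul_of_pos_left hCS (by linarith)
      exact mul_lt_mul_of_pos_left hAA hBpos
    have c1 : 8*π*s - 16*s^2 ≤ 25.132744*s - 16*s^2 := by nlinarith [mul_pos hs0' hs0']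
    have c2 : Real.sqrt 2/2 * (1 + s) ≤ 0.70711 * (1 + s) := by nlinarith
    have c3 : (8*π*s - 16*s^2) * (Real.sqrt 2/2 * (1 + s))
        ≤ (25.132744*s - 16*s^2) * (0.70711 * (1 + s)) := by
      apply mul_le_mul c1 c2 (by positivity) (by nlinarith)
    have c4 : (25.132744*s - 16*s^2) * (0.70711 * (1 + s))
        ≤ 9.8696 * (2*s - (4/3)*s^3 - (5/6)*s^4) := by
      nlinarith [mul_nonneg (le_of_lt hs0') (le_of_lt hs0'),
        mul_nonneg (mul_nonneg (le_of_lt hs0') (le_of_lt hs0')) (le_of_lt hs0'),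
        mul_nonneg (mul_nonneg (mul_nonneg (le_of_lt hs0') (le_of_lt hs0')) (le_of_lt hs0')) (le_of_lt hs0'),
        mul_nonneg (le_of_lt hs0') (sub_nonneg.2 hs1),
        mul_nonneg (mul_nonneg (le_of_lt hs0') (le_of_lt hs0')) (sub_nonneg.2 hs1),
        mul_nonneg (mul_nonneg (mul_nonneg (le_of_lt hs0') (le_of_lt hs0')) (le_of_lt hs0')) (sub_nonneg.2 hs1)]
    have c5 : 9.8696 * (2*s - (4/3)*s^3 - (5/6)*s^4) ≤ π^2 * (2*s - (4/3)*s^3 - (5/6)*s^4) := by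
      have hpos : 0 ≤ 2*s - (4/3)*s^3 - (5/6)*s^4 := by nlinarith
      nlinarith [mul_le_mul_of_nonneg_right (le_of_lt hπ2l) hpos]
    have step3 : π^2 * (2*s - (4/3)*s^3 - (5/6)*s^4) ≤ π^2 * sin (2*s) :=
      mul_le_mul_of_nonneg_left hsinub (by positivity)
    have hsuff : (8*π*s - 16*s^2) * (Real.sqrt 2/2 * (cos s + sin s)) < π^2 * sin (2*s) := by
      linarith
    rw [hc2t, hct, ht]
    nlinarith [hsuff]

theorem stmt_0 (x : ℝ) (hx0 : 0 < x) (hx1 : x < π / 2) :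
    (1 - cos x / cos (x / 2)) / x ^ 2 < 4 / π ^ 2 := by
  have hπ : 0 < π := pi_pos
  have hc : 0 < cos (x/2) := Real.cos_pos_of_mem_Ioo (Set.mem_Ioo.mpr ⟨by linarith, by linarith⟩)
  have hk := key (x/2) (by linarith) (by linarith)
  rw [show 2*(x/2) = x by ring] at hk
  have h1 : 1 - cos x / cos (x/2) = (cos (x/2) - cos x) / cos (x/2) := by
    field_simp
  rw [h1, div_div, div_lt_div_iff₀ (by positivity) (by positivity)]
  nlinarith [hk]
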